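/- (Degenerate Fay identity) For z, x, y with the relevant theta values nonzero, φ(z,x)φ(z,y) = φ(z,x+y)·(E₁(z) + E₁(x) + E₁(y) − E₁(x+y+z)), where E₁(u) = θ'(u)/θ(u). -/

import Mathlib

set_option maxHeartbeats 1000000

open Complex

/-- The odd theta function
`θ(u) = −∑_{k∈ℤ} exp(πiτ(k+1/2)² + 2πi(k+1/2)(u+1/2))`. -/
noncomputable def jtheta (τ u : ℂ) : ℂ :=
  -∑' k : ℤ, Complex.exp (Real.pi * Complex.I * τ * ((k : ℂ) + 1/2)^2 +
      2 * Real.pi * Complex.I * ((k : ℂ) + 1/2) * (u + 1/2))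


/-- The Kronecker elliptic function `φ(u,x) = θ'(0)θ(u+x)/(θ(u)θ(x))`. -/
noncomputable def kron (τ u x : ℂ) : ℂ :=
  deriv (jtheta τ) 0 * jtheta τ (u + x) / (jtheta τ u * jtheta τ x)


/-- The first Eisenstein function `E₁(u) = θ'(u)/θ(u)`. -/
noncomputable def E1 (τ u : ℂ) : ℂ := deriv (jtheta τ) u / jtheta τ u

/-- The second Eisenstein function `E₂ = −E₁'`. -/
noncomputable def E2 (τ u : ℂ) : ℂ := -deriv (E1 τ) u

noncomputable section FayAux

open Real

def jT (τ u : ℂ) (k : ℤ) : ℂ :=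
  Complex.exp (Real.pi * Complex.I * τ * ((k : ℂ) + 1/2)^2 +
      2 * Real.pi * Complex.I * ((k : ℂ) + 1/2) * (u + 1/2))

def m1 (n : ℤ) : ℂ := Complex.exp (Real.pi * Complex.I * (n : ℂ))

lemma m1_two_mul (a : ℤ) : m1 (2*a) = 1 := by
  rw [m1, show (Real.pi : ℂ) * Complex.I * ((2*a : ℤ) : ℂ) = (a : ℂ) * (2 * Real.pi * Complex.I) by
    push_cast; ring, Complex.exp_int_mul_two_pi_mul_I]

lemma m1_two_mul_add_one (a : ℤ) : m1 (2*a+1) = -1 := by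
  rw [m1, show (Real.pi : ℂ) * Complex.I * ((2*a+1 : ℤ) : ℂ) =
    (a : ℂ) * (2 * Real.pi * Complex.I) + Real.pi * Complex.I by push_cast; ring,
    Complex.exp_add, Complex.exp_int_mul_two_pi_mul_I, Complex.exp_pi_mul_I, one_mul]

lemma norm_m1 (n : ℤ) : ‖m1 n‖ = 1 := by
  rcases Int.even_or_odd' n with ⟨a, rfl | rfl⟩ <;>
    simp [m1_two_mul, m1_two_mul_add_one]

def cf (τ : ℂ) (p q : ℤ) : ℂ :=
  if Odd (p+q) then m1 p * Complex.exp (Real.pi * Complex.I * τ * ((p:ℂ)^2+(q:ℂ)^2)/2) else 0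

def ee (x y : ℂ) (p q : ℤ) : ℂ :=
  Complex.exp (2 * Real.pi * Complex.I * ((p:ℂ)*x + (q:ℂ)*y))

lemma cf_rel (τ : ℂ) (p q r s : ℤ) :
    cf τ p q * cf τ r s = cf τ p r * cf τ q s - cf τ p s * cf τ q r := by
  unfold cf
  rcases Int.even_or_odd' p with ⟨a, rfl | rfl⟩ <;>
  rcases Int.even_or_odd' q with ⟨b, rfl | rfl⟩ <;>
  rcases Int.even_or_odd' r with ⟨c, rfl | rfl⟩ <;>
  rcases Int.even_or_odd' s with ⟨d, rfl | rfl⟩ <;>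
  simp only [m1_two_mul, m1_two_mul_add_one] <;>
  simp [parity_simps, Int.odd_mul, (by decide : ¬ Odd (2:ℤ))] <;>
  simp only [one_mul, neg_one_mul, neg_mul, mul_neg, neg_neg, ← Complex.exp_add] <;>
  ring_nf

lemma jT_eq (τ u : ℂ) (k : ℤ) :
    jT τ u k = Complex.exp (Real.pi * Complex.I * τ / 4 + Real.pi * Complex.I * (u + 1/2)) *
      jacobiTheta₂_term k (u + 1/2 + τ/2) τ := by
  rw [jT, jacobiTheta₂_term, ← Complex.exp_add]
  congr 1
  ring

lemma summable_norm_jtt (z τ : ℂ) (hτ : 0 < τ.im) :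
    Summable (fun n : ℤ => ‖jacobiTheta₂_term n z τ‖) := by
  refine (summable_pow_mul_jacobiTheta₂_term_bound |z.im| hτ 0).of_nonneg_of_le
    (fun n => norm_nonneg _) (fun n => ?_)
  simpa only [pow_zero, one_mul] using norm_jacobiTheta₂_term_le hτ le_rfl le_rfl n

lemma summable_norm_jT (τ u : ℂ) (hτ : 0 < τ.im) :
    Summable (fun k : ℤ => ‖jT τ u k‖) := by
  simp only [jT_eq, norm_mul]
  exact (summable_norm_jtt (u + 1/2 + τ/2) τ hτ).mul_left _

lemma im_half {τ : ℂ} (hτ : 0 < τ.im) : 0 < (τ/2).im := by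
  rw [show (2:ℂ) = ((2:ℝ):ℂ) by norm_num, Complex.div_ofReal_im]
  positivity

lemma cf_ee_eq {p q : ℤ} (τ x y : ℂ) (h : Odd (p+q)) :
    cf τ p q * ee x y p q =
      m1 p * (jacobiTheta₂_term p x (τ/2) * jacobiTheta₂_term q y (τ/2)) := by
  simp only [cf, h, if_true, ee, jacobiTheta₂_term, mul_assoc, ← Complex.exp_add]
  congr 2
  ring

lemma norm_cfee_le (τ x y : ℂ) (p q : ℤ) :
    ‖cf τ p q * ee x y p q‖ ≤
      ‖jacobiTheta₂_term p x (τ/2)‖ * ‖jacobiTheta₂_term q y (τ/2)‖ := by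
  by_cases h : Odd (p+q)
  · rw [cf_ee_eq τ x y h, norm_mul, norm_m1, one_mul, norm_mul]
  · simp only [cf, h, if_false, zero_mul, norm_zero]
    positivity

lemma summable_norm_cfee (τ x y : ℂ) (hτ : 0 < τ.im) :
    Summable (fun pq : ℤ × ℤ => ‖cf τ pq.1 pq.2 * ee x y pq.1 pq.2‖) := by
  have h1 := summable_norm_jtt x (τ/2) (im_half hτ)
  have h2 := summable_norm_jtt y (τ/2) (im_half hτ)
  have H : Summable (fun pq : ℤ × ℤ =>
      ‖jacobiTheta₂_term pq.1 x (τ/2)‖ * ‖jacobiTheta₂_term pq.2 y (τ/2)‖) :=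
    h1.mul_of_nonneg h2 (fun _ => norm_nonneg _) (fun _ => norm_nonneg _)
  exact Summable.of_nonneg_of_le (fun _ => norm_nonneg _)
    (fun pq => norm_cfee_le τ x y pq.1 pq.2) H

lemma jT_mul_jT (τ x y : ℂ) (k l : ℤ) :
    jT τ (x+y) k * jT τ (x-y) l = cf τ (k+l+1) (k-l) * ee x y (k+l+1) (k-l) := by
  have h : Odd (k+l+1+(k-l)) := ⟨k, by ring⟩
  simp only [cf, h, if_true, ee, jT, m1, mul_assoc, ← Complex.exp_add]
  congr 1
  push_cast
  ring

lemma jtheta_mul (τ x y : ℂ) (hτ : 0 < τ.im) :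
    jtheta τ (x+y) * jtheta τ (x-y) = ∑' pq : ℤ × ℤ, cf τ pq.1 pq.2 * ee x y pq.1 pq.2 := by
  have h1 : jtheta τ (x+y) = -∑' k : ℤ, jT τ (x+y) k := rfl
  have h2 : jtheta τ (x-y) = -∑' k : ℤ, jT τ (x-y) k := rfl
  rw [h1, h2, neg_mul_neg,
    tsum_mul_tsum_of_summable_norm (summable_norm_jT τ (x+y) hτ) (summable_norm_jT τ (x-y) hτ)]
  have hinj : Function.Injective (fun kl : ℤ × ℤ => ((kl.1+kl.2+1, kl.1-kl.2) : ℤ × ℤ)) := by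
    intro ⟨k, l⟩ ⟨k', l'⟩ h
    simp only [Prod.mk.injEq] at h ⊢
    omega
  have hsupp : Function.support (fun pq : ℤ × ℤ => cf τ pq.1 pq.2 * ee x y pq.1 pq.2) ⊆
      Set.range (fun kl : ℤ × ℤ => ((kl.1+kl.2+1, kl.1-kl.2) : ℤ × ℤ)) := by
    rintro ⟨p, q⟩ h
    have hodd : Odd (p + q) := by
      by_contra hc
      simp [cf, if_neg hc, Function.mem_support] at h
    obtain ⟨m, hm⟩ := hodd
    exact ⟨(m, p - m - 1), by simp only [Prod.mk.injEq]; omega⟩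
  rw [← Function.Injective.tsum_eq hinj hsupp]
  exact tsum_congr fun kl => jT_mul_jT τ x y kl.1 kl.2

end FayAux

lemma ee_mul_ee_1 (x y u v : ℂ) (p q r s : ℤ) :
    ee x y p q * ee u v r s =
      Complex.exp (2 * Real.pi * Complex.I * ((p:ℂ)*x + (q:ℂ)*y + (r:ℂ)*u + (s:ℂ)*v)) := by
  rw [ee, ee, ← Complex.exp_add]; congr 1; ring

lemma ee_mul_ee_2 (x y u v : ℂ) (p q r s : ℤ) :
    ee x u p r * ee y v q s =
      Complex.exp (2 * Real.pi * Complex.I * ((p:ℂ)*x + (q:ℂ)*y + (r:ℂ)*u + (s:ℂ)*v)) := by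
  rw [ee, ee, ← Complex.exp_add]; congr 1; ring

lemma ee_mul_ee_3 (x y u v : ℂ) (p q r s : ℤ) :
    ee x v p s * ee y u q r =
      Complex.exp (2 * Real.pi * Complex.I * ((p:ℂ)*x + (q:ℂ)*y + (r:ℂ)*u + (s:ℂ)*v)) := by
  rw [ee, ee, ← Complex.exp_add]; congr 1; ring

lemma weier (τ : ℂ) (hτ : 0 < τ.im) (x y u v : ℂ) :
    jtheta τ (x+y) * jtheta τ (x-y) * (jtheta τ (u+v) * jtheta τ (u-v)) =
      jtheta τ (x+u) * jtheta τ (x-u) * (jtheta τ (y+v) * jtheta τ (y-v))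
      - jtheta τ (x+v) * jtheta τ (x-v) * (jtheta τ (y+u) * jtheta τ (y-u)) := by
  rw [jtheta_mul τ x y hτ, jtheta_mul τ u v hτ, jtheta_mul τ x u hτ, jtheta_mul τ y v hτ,
    jtheta_mul τ x v hτ, jtheta_mul τ y u hτ,
    tsum_mul_tsum_of_summable_norm (summable_norm_cfee τ x y hτ) (summable_norm_cfee τ u v hτ),
    tsum_mul_tsum_of_summable_norm (summable_norm_cfee τ x u hτ) (summable_norm_cfee τ y v hτ),
    tsum_mul_tsum_of_summable_norm (summable_norm_cfee τ x v hτ) (summable_norm_cfee τ y u hτ)]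
  have e2 : ((ℤ×ℤ)×(ℤ×ℤ)) ≃ ((ℤ×ℤ)×(ℤ×ℤ)) := Equiv.prodProdProdComm ℤ ℤ ℤ ℤ
  have hσ2 : (∑' w : (ℤ×ℤ)×(ℤ×ℤ),
        cf τ w.1.1 w.2.1 * ee x u w.1.1 w.2.1 * (cf τ w.1.2 w.2.2 * ee y v w.1.2 w.2.2))
      = ∑' w : (ℤ×ℤ)×(ℤ×ℤ),
        cf τ w.1.1 w.1.2 * ee x u w.1.1 w.1.2 * (cf τ w.2.1 w.2.2 * ee y v w.2.1 w.2.2) :=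
    Equiv.tsum_eq (Equiv.prodProdProdComm ℤ ℤ ℤ ℤ)
      (fun w => cf τ w.1.1 w.1.2 * ee x u w.1.1 w.1.2 * (cf τ w.2.1 w.2.2 * ee y v w.2.1 w.2.2))
  have hσ3 : (∑' w : (ℤ×ℤ)×(ℤ×ℤ),
        cf τ w.1.1 w.2.2 * ee x v w.1.1 w.2.2 * (cf τ w.1.2 w.2.1 * ee y u w.1.2 w.2.1))
      = ∑' w : (ℤ×ℤ)×(ℤ×ℤ),
        cf τ w.1.1 w.1.2 * ee x v w.1.1 w.1.2 * (cf τ w.2.1 w.2.2 * ee y u w.2.1 w.2.2) :=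
    Equiv.tsum_eq ((Equiv.prodCongr (Equiv.refl (ℤ×ℤ)) (Equiv.prodComm ℤ ℤ)).trans
        (Equiv.prodProdProdComm ℤ ℤ ℤ ℤ))
      (fun w => cf τ w.1.1 w.1.2 * ee x v w.1.1 w.1.2 * (cf τ w.2.1 w.2.2 * ee y u w.2.1 w.2.2))
  rw [← hσ2, ← hσ3]
  have hS2 : Summable (fun w : (ℤ×ℤ)×(ℤ×ℤ) =>
      cf τ w.1.1 w.2.1 * ee x u w.1.1 w.2.1 * (cf τ w.1.2 w.2.2 * ee y v w.1.2 w.2.2)) := by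
    have := summable_mul_of_summable_norm (summable_norm_cfee τ x u hτ) (summable_norm_cfee τ y v hτ)
    exact (Equiv.summable_iff (Equiv.prodProdProdComm ℤ ℤ ℤ ℤ)).mpr this
  have hS3 : Summable (fun w : (ℤ×ℤ)×(ℤ×ℤ) =>
      cf τ w.1.1 w.2.2 * ee x v w.1.1 w.2.2 * (cf τ w.1.2 w.2.1 * ee y u w.1.2 w.2.1)) := by
    have := summable_mul_of_summable_norm (summable_norm_cfee τ x v hτ) (summable_norm_cfee τ y u hτ)
    exact (Equiv.summable_iff ((Equiv.prodCongr (Equiv.refl (ℤ×ℤ)) (Equiv.prodComm ℤ ℤ)).trans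
        (Equiv.prodProdProdComm ℤ ℤ ℤ ℤ))).mpr this
  rw [← Summable.tsum_sub hS2 hS3]
  refine tsum_congr fun w => ?_
  obtain ⟨⟨p, q⟩, ⟨r, s⟩⟩ := w
  simp only []
  rw [mul_mul_mul_comm (cf τ p q), mul_mul_mul_comm (cf τ p r), mul_mul_mul_comm (cf τ p s),
    ee_mul_ee_1, ee_mul_ee_2, ee_mul_ee_3, cf_rel τ p q r s]
  ring

lemma jtheta_eq_jacobi (τ u : ℂ) :
    jtheta τ u = -(Complex.exp (Real.pi*Complex.I*τ/4 + Real.pi*Complex.I*(u+1/2)) *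
      jacobiTheta₂ (u + (1/2 + τ/2)) τ) := by
  have h : jtheta τ u = -∑' k : ℤ, jT τ u k := rfl
  rw [h, jacobiTheta₂, ← tsum_mul_left]
  refine neg_inj.mpr (tsum_congr fun k => ?_)
  rw [jT_eq τ u k]
  congr 2
  ring

lemma jtheta_differentiable {τ : ℂ} (hτ : 0 < τ.im) : Differentiable ℂ (jtheta τ) := by
  have hfun : jtheta τ = fun u => -(Complex.exp (Real.pi*Complex.I*τ/4 + Real.pi*Complex.I*(u+1/2)) *
      jacobiTheta₂ (u + (1/2 + τ/2)) τ) := funext (jtheta_eq_jacobi τ)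
  rw [hfun]
  apply Differentiable.neg
  apply Differentiable.mul
  · apply Differentiable.cexp
    apply Differentiable.const_add
    exact (differentiable_id.add_const _).const_mul _
  · intro u
    exact ((hasDerivAt_jacobiTheta₂_fst (u + (1/2 + τ/2)) hτ).differentiableAt).comp u
      (differentiableAt_id.add_const _)

lemma jT_neg (τ u : ℂ) (k : ℤ) : jT τ (-u) (-1-k) = - jT τ u k := by
  rw [jT, jT, show Real.pi * Complex.I * τ * (((-1-k : ℤ) : ℂ) + 1/2)^2 +
      2 * Real.pi * Complex.I * (((-1-k : ℤ) : ℂ) + 1/2) * (-u + 1/2)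
      = (Real.pi * Complex.I * τ * (((k : ℤ) : ℂ) + 1/2)^2 +
        2 * Real.pi * Complex.I * (((k : ℤ) : ℂ) + 1/2) * (u + 1/2))
        + (((-k-1 : ℤ) : ℂ) * (2 * Real.pi * Complex.I) + Real.pi * Complex.I) from by
      push_cast; ring,
    Complex.exp_add, Complex.exp_add, Complex.exp_add, Complex.exp_int_mul_two_pi_mul_I,
    Complex.exp_pi_mul_I]
  ring

lemma jtheta_neg (τ u : ℂ) : jtheta τ (-u) = - jtheta τ u := by
  have h1 : jtheta τ (-u) = -∑' k : ℤ, jT τ (-u) k := rfl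
  have h2 : jtheta τ u = -∑' k : ℤ, jT τ u k := rfl
  rw [h1, h2, neg_neg]
  have e : ℤ ≃ ℤ := Function.Involutive.toPerm (fun k => -1-k) (fun k => by ring)
  have h3 : ∑' k : ℤ, jT τ (-u) k = ∑' k : ℤ, jT τ (-u) (-1-k) :=
    (Equiv.tsum_eq (Function.Involutive.toPerm (fun k : ℤ => -1-k) (fun k => by ring)) _).symm
  rw [h3]
  rw [show (fun k : ℤ => jT τ (-u) (-1-k)) = fun k : ℤ => -(jT τ u k) from
    funext fun k => jT_neg τ u k, tsum_neg, neg_neg]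

lemma jtheta_zero (τ : ℂ) : jtheta τ 0 = 0 := by
  have h := jtheta_neg τ 0
  rw [neg_zero] at h
  linear_combination h / 2

lemma deriv_jtheta_neg (τ u : ℂ) : deriv (jtheta τ) (-u) = deriv (jtheta τ) u := by
  have h2 := deriv_comp_neg (jtheta τ) u
  rw [show (fun v => jtheta τ (-v)) = fun v => -jtheta τ v from funext fun v => jtheta_neg τ v,
    deriv.fun_neg] at h2
  exact neg_injective h2.symm

lemma wsub (τ : ℂ) (hτ : 0 < τ.im) (z x y t : ℂ) :
    jtheta τ (z+x+t) * jtheta τ (z+y) * (jtheta τ (x+y) * jtheta τ t) =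
      jtheta τ (z+x+y+t) * jtheta τ z * (jtheta τ x * jtheta τ (t-y))
      - jtheta τ (z+x+y) * jtheta τ (z+t) * (jtheta τ (x+t) * jtheta τ (-y)) := by
  have h := weier τ hτ (z+(x+y+t)/2) ((x-y+t)/2) ((x+y+t)/2) ((x+y-t)/2)
  rw [show z+(x+y+t)/2 + (x-y+t)/2 = z+x+t by ring,
    show z+(x+y+t)/2 - (x-y+t)/2 = z+y by ring,
    show (x+y+t)/2 + (x+y-t)/2 = x+y by ring,
    show (x+y+t)/2 - (x+y-t)/2 = t by ring,
    show z+(x+y+t)/2 + (x+y+t)/2 = z+x+y+t by ring,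
    show z+(x+y+t)/2 - (x+y+t)/2 = z by ring,
    show (x-y+t)/2 + (x+y-t)/2 = x by ring,
    show (x-y+t)/2 - (x+y-t)/2 = t-y by ring,
    show z+(x+y+t)/2 + (x+y-t)/2 = z+x+y by ring,
    show z+(x+y+t)/2 - (x+y-t)/2 = z+t by ring,
    show (x-y+t)/2 + (x+y+t)/2 = x+t by ring,
    show (x-y+t)/2 - (x+y+t)/2 = -y by ring] at h
  exact h

lemma Gident (τ : ℂ) (hτ : 0 < τ.im) (z x y : ℂ) :
    deriv (jtheta τ) 0 * (jtheta τ (z+x) * jtheta τ (z+y) * jtheta τ (x+y)) =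
      jtheta τ (x+y+z) * (deriv (jtheta τ) z * jtheta τ x * jtheta τ y
        + jtheta τ z * deriv (jtheta τ) x * jtheta τ y
        + jtheta τ z * jtheta τ x * deriv (jtheta τ) y)
      - deriv (jtheta τ) (x+y+z) * (jtheta τ z * jtheta τ x * jtheta τ y) := by
  have hD : ∀ s : ℂ, HasDerivAt (jtheta τ) (deriv (jtheta τ) s) s :=
    fun s => (jtheta_differentiable hτ s).hasDerivAt
  have h1 : HasDerivAt (fun t : ℂ => jtheta τ (z+x+t)) (deriv (jtheta τ) (z+x)) 0 := by
    simpa using HasDerivAt.comp_const_add (z+x) 0 (hD _)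
  have h2 : HasDerivAt (fun t : ℂ => jtheta τ (z+x+y+t)) (deriv (jtheta τ) (z+x+y)) 0 := by
    simpa using HasDerivAt.comp_const_add (z+x+y) 0 (hD _)
  have h3 : HasDerivAt (fun t : ℂ => jtheta τ (t-y)) (deriv (jtheta τ) (-y)) 0 := by
    simpa using HasDerivAt.comp_sub_const 0 y (hD _)
  have h4 : HasDerivAt (fun t : ℂ => jtheta τ (z+t)) (deriv (jtheta τ) z) 0 := by
    simpa using HasDerivAt.comp_const_add z 0 (hD _)
  have h5 : HasDerivAt (fun t : ℂ => jtheta τ (x+t)) (deriv (jtheta τ) x) 0 := by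
    simpa using HasDerivAt.comp_const_add x 0 (hD _)
  have hL := (h1.mul_const (jtheta τ (z+y))).mul ((hD 0).const_mul (jtheta τ (x+y)))
  have hR := ((h2.mul_const (jtheta τ z)).mul (h3.const_mul (jtheta τ x))).sub
    ((h4.const_mul (jtheta τ (z+x+y))).mul (h5.mul_const (jtheta τ (-y))))
  have hfun : (fun t : ℂ => jtheta τ (z+x+t) * jtheta τ (z+y) * (jtheta τ (x+y) * jtheta τ t))
      = fun t : ℂ => jtheta τ (z+x+y+t) * jtheta τ z * (jtheta τ x * jtheta τ (t-y))
        - jtheta τ (z+x+y) * jtheta τ (z+t) * (jtheta τ (x+t) * jtheta τ (-y)) :=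
    funext fun t => wsub τ hτ z x y t
  have e1 : deriv (fun t : ℂ => jtheta τ (z+x+t) * jtheta τ (z+y) * (jtheta τ (x+y) * jtheta τ t)) 0 = _ := hL.deriv
  rw [hfun] at e1
  have e2 := hR.deriv
  have E := e1.symm.trans e2
  simp only [add_zero, zero_sub, zero_add, jtheta_zero, mul_zero, zero_mul, sub_zero,
    jtheta_neg, deriv_jtheta_neg] at E
  rw [show z+x+y = x+y+z by ring] at E
  linear_combination E


set_option maxHeartbeats 1000000 in
/-- Degeneration of the Fay identity. -/
theorem fay_degenerate (τ : ℂ) (hτ : 0 < τ.im) (z x y : ℂ)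
    (hz : jtheta τ z ≠ 0) (hx : jtheta τ x ≠ 0) (hy : jtheta τ y ≠ 0)
    (hxy : jtheta τ (x + y) ≠ 0) (hxyz : jtheta τ (x + y + z) ≠ 0) :
    kron τ z x * kron τ z y =
      kron τ z (x + y) * (E1 τ z + E1 τ x + E1 τ y - E1 τ (x + y + z)) := by
  have G := Gident τ hτ z x y
  have hcomb : E1 τ z + E1 τ x + E1 τ y - E1 τ (x+y+z) =
      (deriv (jtheta τ) z * jtheta τ x * jtheta τ y * jtheta τ (x+y+z)
       + jtheta τ z * deriv (jtheta τ) x * jtheta τ y * jtheta τ (x+y+z)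
       + jtheta τ z * jtheta τ x * deriv (jtheta τ) y * jtheta τ (x+y+z)
       - deriv (jtheta τ) (x+y+z) * (jtheta τ z * jtheta τ x * jtheta τ y))
      / (jtheta τ z * jtheta τ x * jtheta τ y * jtheta τ (x+y+z)) := by
    rw [E1, E1, E1, E1]
    field_simp
  rw [hcomb, kron, kron, kron, show z + (x + y) = x + y + z by ring,
    div_mul_div_comm, div_mul_div_comm,
    div_eq_div_iff (by apply_rules [mul_ne_zero])
      (by apply_rules [mul_ne_zero])]
  linear_combination (deriv (jtheta τ) 0 * jtheta τ (x+y+z) * jtheta τ z^2 * jtheta τ x *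
    jtheta τ y) * G
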